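/- Let p be an odd prime, k ≥ 1, and G = D_{p^k}. In the superpower graph S_G, the degree of the identity is 2p^k − 1, the degree of every reflection is p^k, and the degree of every nonidentity rotation is p^k − 1. -/

import Mathlib

open DihedralGroup Finset

def superpowerGraph (G : Type*) [Group G] : SimpleGraph G where
  Adj a b := a ≠ b ∧ (orderOf a ∣ orderOf b ∨ orderOf b ∣ orderOf a)
  symm := ⟨fun _ _ h => ⟨h.1.symm, h.2.symm⟩⟩
  loopless := ⟨fun _ h => h.1 rfl⟩

noncomputable instance (G : Type*) [Group G] [DecidableEq G] :
    DecidableRel (superpowerGraph G).Adj :=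
  fun a b => (instDecidableAnd : Decidable (a ≠ b ∧ (orderOf a ∣ orderOf b ∨ orderOf b ∣ orderOf a)))

theorem stmt12 (p k : ℕ) (hp : Fact p.Prime) (hp2 : p ≠ 2) (hk : 1 ≤ k) :
    (superpowerGraph (DihedralGroup (p ^ k))).degree 1 = 2 * p ^ k - 1 ∧
    (∀ i : ZMod (p ^ k),
      (superpowerGraph (DihedralGroup (p ^ k))).degree (DihedralGroup.sr i) = p ^ k) ∧
    (∀ i : ZMod (p ^ k), DihedralGroup.r i ≠ 1 →
      (superpowerGraph (DihedralGroup (p ^ k))).degree (DihedralGroup.r i) = p ^ k - 1) := by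
  haveI : NeZero (p^k) := ⟨pow_ne_zero _ hp.out.ne_zero⟩
  have hpk1 : 1 ≤ p ^ k := Nat.one_le_iff_ne_zero.mpr (pow_ne_zero _ hp.out.ne_zero)
  have hodd : Odd (p^k) := (hp.out.odd_of_ne_two hp2).pow
  have hdvd : ∀ j : ZMod (p^k), orderOf (DihedralGroup.r j) ∣ p^k := by
    intro j
    rw [DihedralGroup.orderOf_r]
    exact Nat.div_dvd_of_dvd (Nat.gcd_dvd_left _ _)
  have hnot2 : ∀ j : ZMod (p^k), ¬ (2 ∣ orderOf (DihedralGroup.r j)) := by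
    intro j h
    exact (Nat.not_even_iff_odd.mpr hodd) (even_iff_two_dvd.mpr (h.trans (hdvd j)))
  have h3 : ∀ j : ZMod (p^k), orderOf (DihedralGroup.r j) ∣ 2 → DihedralGroup.r j = 1 := by
    intro j h
    rw [← orderOf_eq_one_iff]
    rcases (Nat.dvd_prime Nat.prime_two).mp h with h1 | h2
    · exact h1
    · exact absurd (by rw [h2]) (hnot2 j)
  have hcmp : ∀ a b : ZMod (p^k),
      orderOf (DihedralGroup.r a) ∣ orderOf (DihedralGroup.r b) ∨
      orderOf (DihedralGroup.r b) ∣ orderOf (DihedralGroup.r a) := by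
    intro a b
    obtain ⟨m, hm, em⟩ := (Nat.dvd_prime_pow hp.out).mp (hdvd a)
    obtain ⟨n, hn, en⟩ := (Nat.dvd_prime_pow hp.out).mp (hdvd b)
    rw [em, en]
    rcases le_total m n with h | h
    · exact Or.inl (pow_dvd_pow _ h)
    · exact Or.inr (pow_dvd_pow _ h)
  have hcard : Fintype.card (DihedralGroup (p^k)) = 2 * p^k := DihedralGroup.card
  have hrinj : Function.Injective (DihedralGroup.r (n := p^k)) := fun a b h => by
    cases h; rfl
  have hsinj : Function.Injective (DihedralGroup.sr (n := p^k)) := fun a b h => by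
    cases h; rfl
  classical
  refine ⟨?_, ?_, ?_⟩
  · -- identity
    have : (superpowerGraph (DihedralGroup (p^k))).neighborFinset 1 = Finset.univ.erase 1 := by
      ext x
      simp only [SimpleGraph.mem_neighborFinset, Finset.mem_erase, Finset.mem_univ, and_true]
      constructor
      · exact fun h => h.1.symm
      · intro h
        exact ⟨Ne.symm h, Or.inl (by simp)⟩
    rw [SimpleGraph.degree, this, Finset.card_erase_of_mem (Finset.mem_univ _),
      Finset.card_univ, hcard]
  · -- reflections
    intro i
    have : (superpowerGraph (DihedralGroup (p^k))).neighborFinset (sr i) =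
        insert 1 ((Finset.univ.image (DihedralGroup.sr (n := p^k))).erase (sr i)) := by
      ext x
      simp only [SimpleGraph.mem_neighborFinset, Finset.mem_insert, Finset.mem_erase,
        Finset.mem_image, Finset.mem_univ, true_and]
      constructor
      · rintro ⟨hne, hdv⟩
        cases x with
        | r j =>
          left
          rw [DihedralGroup.orderOf_sr] at hdv
          rcases hdv with h | h
          · exact absurd h (hnot2 j)
          · exact h3 j h
        | sr j => exact Or.inr ⟨Ne.symm hne, j, rfl⟩
      · rintro (rfl | ⟨hne, j, rfl⟩)
        · refine ⟨?_, Or.inr ?_⟩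
          · rw [DihedralGroup.one_def]; exact fun h => (by cases h)
          · simp
        · exact ⟨Ne.symm hne, Or.inl (by simp [DihedralGroup.orderOf_sr])⟩
    rw [SimpleGraph.degree, this]
    rw [Finset.card_insert_of_notMem (by
      simp only [Finset.mem_erase, Finset.mem_image, Finset.mem_univ, true_and,
        DihedralGroup.one_def]
      rintro ⟨-, j, h⟩
      exact (by cases h)),
      Finset.card_erase_of_mem (Finset.mem_image.mpr ⟨i, Finset.mem_univ _, rfl⟩),
      Finset.card_image_of_injective _ hsinj, Finset.card_univ, ZMod.card]
    omega
  · -- rotations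
    intro i hi
    have : (superpowerGraph (DihedralGroup (p^k))).neighborFinset (r i) =
        (Finset.univ.image (DihedralGroup.r (n := p^k))).erase (r i) := by
      ext x
      simp only [SimpleGraph.mem_neighborFinset, Finset.mem_erase, Finset.mem_image,
        Finset.mem_univ, true_and]
      constructor
      · rintro ⟨hne, hdv⟩
        cases x with
        | r j => exact ⟨Ne.symm hne, j, rfl⟩
        | sr j =>
          rw [DihedralGroup.orderOf_sr] at hdv
          rcases hdv with h | h
          · exact absurd (h3 i h) hi
          · exact absurd h (hnot2 i)
      · rintro ⟨hne, j, rfl⟩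
        exact ⟨Ne.symm hne, hcmp i j⟩
    rw [SimpleGraph.degree, this,
      Finset.card_erase_of_mem (Finset.mem_image.mpr ⟨i, Finset.mem_univ _, rfl⟩),
      Finset.card_image_of_injective _ hrinj, Finset.card_univ, ZMod.card]
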